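/- Let (Φ₋, Φ₊) solve the coupling problem with data η where η(λ) is finite and nonzero for all λ ∈ σ. If λ ∈ σ were a zero of Φ₋ of multiplicity ≥ 2 (or of Φ₊ of multiplicity ≥ 2), a contradiction arises: all zeros of Φ₋ and Φ₊ are simple. -/

import Mathlib

open Complex Filter Topology Set

noncomputable section

def Complex.abs : AbsoluteValue ℂ ℝ := NormedField.toAbsoluteValue ℂ

lemma Complex.abs_apply (z : ℂ) : Complex.abs z = ‖z‖ := rfl

lemma Complex.abs_ofReal (r : ℝ) : Complex.abs (r : ℂ) = |r| := by
  rw [Complex.abs_apply, Complex.norm_real, Real.norm_eq_abs]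

lemma Complex.abs_I : Complex.abs I = 1 := by
  rw [Complex.abs_apply, Complex.norm_I]

lemma Complex.continuous_abs : Continuous ⇑Complex.abs := continuous_norm

lemma Complex.sq_abs (z : ℂ) : Complex.abs z ^ 2 = Complex.normSq z := by
  rw [Complex.abs_apply, Complex.sq_norm]

namespace CouplingAux

lemma one_add_sum_le_prod {ι : Type*} (s : Finset ι) (a : ι → ℝ)
    (ha : ∀ i ∈ s, 0 ≤ a i) : 1 + ∑ i ∈ s, a i ≤ ∏ i ∈ s, (1 + a i) := by
  classical
  induction s using Finset.cons_induction with
  | empty => simp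
  | cons j s hj ih =>
    rw [Finset.sum_cons, Finset.prod_cons]
    have h0 : ∀ i ∈ s, 0 ≤ a i := fun i hi => ha i (Finset.mem_cons_of_mem hi)
    have hj0 : 0 ≤ a j := ha j (Finset.mem_cons_self _ _)
    have hsum : 0 ≤ ∑ i ∈ s, a i := Finset.sum_nonneg h0
    have ihs := ih h0
    nlinarith [mul_le_mul_of_nonneg_left ihs (by linarith : (0:ℝ) ≤ 1 + a j),
      mul_nonneg hj0 hsum]

lemma one_sub_sum_le_prod {ι : Type*} (s : Finset ι) (a : ι → ℝ)
    (h0 : ∀ i ∈ s, 0 ≤ a i) (h1 : ∀ i ∈ s, a i ≤ 1) :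
    1 - ∑ i ∈ s, a i ≤ ∏ i ∈ s, (1 - a i) := by
  classical
  induction s using Finset.cons_induction with
  | empty => simp
  | cons j s hj ih =>
    rw [Finset.sum_cons, Finset.prod_cons]
    have h0' : ∀ i ∈ s, 0 ≤ a i := fun i hi => h0 i (Finset.mem_cons_of_mem hi)
    have h1' : ∀ i ∈ s, a i ≤ 1 := fun i hi => h1 i (Finset.mem_cons_of_mem hi)
    have hj0 : 0 ≤ a j := h0 j (Finset.mem_cons_self _ _)
    have hj1 : a j ≤ 1 := h1 j (Finset.mem_cons_self _ _)
    have hsum : 0 ≤ ∑ i ∈ s, a i := Finset.sum_nonneg h0'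
    have ihs := ih h0' h1'
    nlinarith [mul_le_mul_of_nonneg_left ihs (by linarith : (0:ℝ) ≤ 1 - a j),
      mul_nonneg hj0 hsum]

variable {σ : Set ℝ} {W : ℂ → ℂ}

lemma coe_ne_zero (hσ0 : ∀ x ∈ σ, x ≠ 0) (l : ↥σ) : ((l : ℝ) : ℂ) ≠ 0 :=
  Complex.ofReal_ne_zero.mpr (hσ0 l l.2)

lemma factor_ne_zero (hσ0 : ∀ x ∈ σ, x ≠ 0) {z : ℂ} (hz : ∀ l : ↥σ, z ≠ ((l : ℝ) : ℂ))
    (l : ↥σ) : (1 : ℂ) - z / ((l : ℝ) : ℂ) ≠ 0 := by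
  intro h
  have h1 : z / ((l : ℝ) : ℂ) = 1 := by
    have := sub_eq_zero.mp h
    exact this.symm
  have := (div_eq_iff (coe_ne_zero hσ0 l)).mp h1
  rw [one_mul] at this
  exact hz l this

lemma summable_part (hσ0 : ∀ x ∈ σ, x ≠ 0)
    (hW : ∀ z : ℂ, HasProd (fun l : σ => (1 - z / ((l : ℝ) : ℂ))) (W z))
    (x : ℝ) (hx : x = 1 ∨ x = -1) (S : Set ↥σ) (hS : ∀ l ∈ S, x * (l : ℝ) < 0) :
    Summable fun l : S => (|((l : ↥σ) : ℝ)|)⁻¹ := by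
  classical
  by_contra hns
  set z : ℂ := (x : ℂ) + I with hzdef
  have hzim : z.im = 1 := by simp [hzdef]
  have hzne : ∀ l : ↥σ, z ≠ ((l : ℝ) : ℂ) := by
    intro l h
    have : z.im = 0 := by rw [h]; simp
    rw [hzim] at this; norm_num at this
  have hfne := factor_ne_zero hσ0 hzne
  -- per-factor lower bound on the bad class
  have key : ∀ l : ↥σ, l ∈ S →
      1 + 2 * (|((l : ℝ))|)⁻¹ ≤ Complex.normSq (1 - z / ((l : ℝ) : ℂ)) := by
    intro l hl
    have hl0 : ((l : ℝ)) ≠ 0 := hσ0 l l.2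
    have habs : 0 < |((l : ℝ))| := abs_pos.mpr hl0
    have hxl : x / (l : ℝ) = -(|((l : ℝ))|)⁻¹ := by
      rcases hx with h | h
      · have hlneg : (l : ℝ) < 0 := by nlinarith [hS l hl]
        rw [h, abs_of_neg hlneg]
        field_simp
      · have hlpos : (0:ℝ) < (l : ℝ) := by nlinarith [hS l hl]
        rw [h, abs_of_pos hlpos]
        field_simp
    have heq : (1 : ℂ) - z / ((l : ℝ) : ℂ)
        = ((1 - x / (l : ℝ) : ℝ) : ℂ) + ((-((l : ℝ))⁻¹ : ℝ) : ℂ) * I := by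
      rw [hzdef]
      have : ((l : ℝ) : ℂ) ≠ 0 := coe_ne_zero hσ0 l
      push_cast
      field_simp
      ring
    rw [heq, Complex.normSq_add_mul_I]
    rw [hxl]
    have ht : 0 < (|((l : ℝ))|)⁻¹ := inv_pos.mpr habs
    have h2 : ((l:ℝ))⁻¹ ^ 2 = ((|((l : ℝ))|)⁻¹)^2 := by
      rw [← abs_inv]
      rcases abs_choice ((l:ℝ))⁻¹ with h | h <;> rw [h] <;> ring
    nlinarith [sq_nonneg ((|((l : ℝ))|)⁻¹)]
  -- partial products eventually bounded
  have hprod : Tendsto (fun s : Finset ↥σ => ∏ l ∈ s, (1 - z / ((l : ℝ) : ℂ))) atTop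
      (𝓝 (W z)) := hW z
  have habsT : Tendsto (fun s : Finset ↥σ => Complex.abs (∏ l ∈ s, (1 - z / ((l : ℝ) : ℂ))))
      atTop (𝓝 (Complex.abs (W z))) := (Complex.continuous_abs.tendsto _).comp hprod
  obtain ⟨s₁, hs₁⟩ := eventually_atTop.mp
    (habsT.eventually_lt_const (by linarith : Complex.abs (W z) < Complex.abs (W z) + 1))
  set c₁ : ℝ := Complex.abs (∏ l ∈ s₁, (1 - z / ((l : ℝ) : ℂ))) with hc₁def
  have hc₁ : 0 < c₁ := by
    apply AbsoluteValue.pos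
    exact Finset.prod_ne_zero_iff.mpr fun l _ => hfne l
  -- get a disjoint finset with large sum
  have hex : ∀ C : ℝ, ∃ F : Finset S, C < ∑ l ∈ F, (|((l : ↥σ) : ℝ)|)⁻¹ := by
    intro C
    by_contra hC
    push_neg at hC
    exact hns (summable_of_sum_le (fun l => inv_nonneg.mpr (abs_nonneg _)) hC)
  set B : ℝ := Complex.abs (W z) + 1 with hBdef
  obtain ⟨F, hF⟩ := hex ((B / c₁)^2 / 2 + ∑ l ∈ s₁, (|((l : ℝ))|)⁻¹)
  set F₁ : Finset ↥σ := F.map (Function.Embedding.subtype _) with hF₁def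
  have hF₁S : ∀ l ∈ F₁, l ∈ S := by
    intro l hl
    rw [hF₁def, Finset.mem_map] at hl
    obtain ⟨a, _, rfl⟩ := hl
    exact a.2
  have hF₁sum : ∑ l ∈ F₁, (|((l : ℝ))|)⁻¹ = ∑ l ∈ F, (|((l : ↥σ) : ℝ)|)⁻¹ := by
    rw [hF₁def, Finset.sum_map]
    rfl
  set F' : Finset ↥σ := F₁ \ s₁ with hF'def
  have hF'S : ∀ l ∈ F', l ∈ S := fun l hl => hF₁S l (Finset.mem_sdiff.mp hl).1
  have hF'sum : (B / c₁)^2 / 2 ≤ ∑ l ∈ F', (|((l : ℝ))|)⁻¹ := by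
    have hsplit := Finset.sum_inter_add_sum_sdiff F₁ s₁ (fun l : ↥σ => (|((l : ℝ))|)⁻¹)
    have hinter : ∑ l ∈ F₁ ∩ s₁, (|((l : ℝ))|)⁻¹ ≤ ∑ l ∈ s₁, (|((l : ℝ))|)⁻¹ :=
      Finset.sum_le_sum_of_subset_of_nonneg (Finset.inter_subset_right)
        (fun l _ _ => inv_nonneg.mpr (abs_nonneg _))
    rw [hF₁sum] at hsplit
    linarith
  -- the contradiction
  set s : Finset ↥σ := s₁ ∪ F' with hsdef
  have hdisj : Disjoint s₁ F' := Finset.disjoint_sdiff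
  have hsub : s₁ ⊆ s := Finset.subset_union_left
  have hlt := hs₁ s (Finset.le_iff_subset.mpr hsub)
  have habs0 : (0:ℝ) ≤ Complex.abs (∏ l ∈ s, (1 - z / ((l : ℝ) : ℂ))) := AbsoluteValue.nonneg _ _
  have hnormSq : Complex.normSq (∏ l ∈ s, (1 - z / ((l : ℝ) : ℂ)))
      = Complex.normSq (∏ l ∈ s₁, (1 - z / ((l : ℝ) : ℂ)))
        * ∏ l ∈ F', Complex.normSq (1 - z / ((l : ℝ) : ℂ)) := by
    rw [hsdef, Finset.prod_union hdisj, map_mul, map_prod, map_prod]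
  have hlow : 1 + ∑ l ∈ F', 2 * (|((l : ℝ))|)⁻¹
      ≤ ∏ l ∈ F', Complex.normSq (1 - z / ((l : ℝ) : ℂ)) := by
    refine le_trans (one_add_sum_le_prod F' _ (fun l _ => by positivity)) ?_
    exact Finset.prod_le_prod (fun l _ => by positivity)
      (fun l hl => key l (hF'S l hl))
  have hsum2 : (B / c₁)^2 ≤ ∑ l ∈ F', 2 * (|((l : ℝ))|)⁻¹ := by
    have hms : ∑ l ∈ F', 2 * (|((l : ℝ))|)⁻¹ = 2 * ∑ l ∈ F', (|((l : ℝ))|)⁻¹ :=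
      (Finset.mul_sum _ _ _).symm
    rw [hms]
    nlinarith [hF'sum]
  have hc₁sq : Complex.normSq (∏ l ∈ s₁, (1 - z / ((l : ℝ) : ℂ))) = c₁^2 := by
    rw [hc₁def, ← Complex.sq_abs]
  have hfinal : B^2 ≤ Complex.normSq (∏ l ∈ s, (1 - z / ((l : ℝ) : ℂ))) := by
    rw [hnormSq, hc₁sq]
    have h1 : (B / c₁)^2 ≤ ∏ l ∈ F', Complex.normSq (1 - z / ((l : ℝ) : ℂ)) := by
      nlinarith [Finset.sum_nonneg (fun l (_ : l ∈ F') => by positivity :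
        ∀ l ∈ F', (0:ℝ) ≤ 2 * (|((l : ℝ))|)⁻¹)]
    calc B^2 = c₁^2 * (B/c₁)^2 := by field_simp
    _ ≤ _ := by nlinarith [sq_nonneg c₁, hc₁]
  rw [← Complex.sq_abs] at hfinal
  have hBpos : 0 < B := by positivity
  nlinarith [hlt, habs0]


lemma summable_inv_abs (hσ0 : ∀ x ∈ σ, x ≠ 0)
    (hW : ∀ z : ℂ, HasProd (fun l : σ => (1 - z / ((l : ℝ) : ℂ))) (W z)) :
    Summable fun l : ↥σ => (|(l : ℝ)|)⁻¹ := by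
  set S : Set ↥σ := {l | 0 < (l : ℝ)} with hSdef
  have h1 : Summable fun l : S => (|((l : ↥σ) : ℝ)|)⁻¹ :=
    summable_part hσ0 hW (-1) (Or.inr rfl) S (fun l hl => by
      have : (0:ℝ) < (l : ℝ) := hl
      nlinarith)
  have h2 : Summable fun l : ↥Sᶜ => (|((l : ↥σ) : ℝ)|)⁻¹ :=
    summable_part hσ0 hW 1 (Or.inl rfl) Sᶜ (fun l hl => by
      have hne : ((l : ℝ)) ≠ 0 := hσ0 l l.2
      have hnp : ¬ (0:ℝ) < (l : ℝ) := hl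
      have : (l : ℝ) < 0 := lt_of_le_of_ne (not_lt.mp hnp) hne
      nlinarith)
  exact summable_subtype_and_compl.mp ⟨h1, h2⟩

lemma tail_small (hσ0 : ∀ x ∈ σ, x ≠ 0)
    (hW : ∀ z : ℂ, HasProd (fun l : σ => (1 - z / ((l : ℝ) : ℂ))) (W z))
    (ε : ℝ) (hε : 0 < ε) (t : Finset ↥σ) :
    ∃ s₀ : Finset ↥σ, t ⊆ s₀ ∧
      ∀ F : Finset ↥σ, Disjoint F s₀ → ∑ l ∈ F, (|(l : ℝ)|)⁻¹ ≤ ε := by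
  obtain ⟨L, hL⟩ := summable_inv_abs hσ0 hW
  have hT : Tendsto (fun s : Finset ↥σ => ∑ l ∈ s, (|(l : ℝ)|)⁻¹) atTop (𝓝 L) := hL
  have hev : ∀ᶠ s : Finset ↥σ in atTop, |(∑ l ∈ s, (|(l : ℝ)|)⁻¹) - L| < ε / 2 := by
    have := Metric.tendsto_nhds.mp hT (ε/2) (by positivity)
    simpa [Real.dist_eq] using this
  obtain ⟨s₀', hs₀'⟩ := eventually_atTop.mp hev
  refine ⟨s₀' ∪ t, Finset.subset_union_right, fun F hF => ?_⟩
  have hdisj : Disjoint F s₀' := hF.mono_right Finset.subset_union_left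
  have h1 := hs₀' s₀' le_rfl
  have h2 := hs₀' (s₀' ∪ F) Finset.subset_union_left
  have hsplit : ∑ l ∈ s₀' ∪ F, (|(l : ℝ)|)⁻¹
      = ∑ l ∈ s₀', (|(l : ℝ)|)⁻¹ + ∑ l ∈ F, (|(l : ℝ)|)⁻¹ :=
    Finset.sum_union hdisj.symm
  rw [hsplit] at h2
  have h1' := abs_lt.mp h1
  have h2' := abs_lt.mp h2
  linarith [h1'.1, h1'.2, h2'.1, h2'.2]

lemma W_lower (hσ0 : ∀ x ∈ σ, x ≠ 0)
    (hW : ∀ z : ℂ, HasProd (fun l : σ => (1 - z / ((l : ℝ) : ℂ))) (W z))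
    (t : Finset ↥σ) (R : ℝ) (hR : 0 < R) :
    ∃ s₀ : Finset ↥σ, t ⊆ s₀ ∧ ∀ z : ℂ, Complex.abs z ≤ R →
      Complex.abs (∏ l ∈ s₀, (1 - z / ((l : ℝ) : ℂ))) / 2 ≤ Complex.abs (W z) := by
  obtain ⟨s₀, hts, htail⟩ := tail_small hσ0 hW ((2*R)⁻¹) (by positivity) t
  refine ⟨s₀, hts, fun z hzR => ?_⟩
  have hbound : ∀ s : Finset ↥σ, s₀ ≤ s →
      Complex.abs (∏ l ∈ s₀, (1 - z / ((l : ℝ) : ℂ))) / 2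
        ≤ Complex.abs (∏ l ∈ s, (1 - z / ((l : ℝ) : ℂ))) := by
    intro s hss
    rw [← Finset.prod_sdiff (Finset.le_iff_subset.mp hss), map_mul]
    have hdisj : Disjoint (s \ s₀) s₀ := Finset.sdiff_disjoint
    have hterm : ∀ l ∈ s \ s₀, R * (|(l : ℝ)|)⁻¹ ≤ 1/2 := by
      intro l hl
      have hsingle := htail {l} (Finset.disjoint_singleton_left.mpr
        (Finset.mem_sdiff.mp hl).2)
      rw [Finset.sum_singleton] at hsingle
      calc R * (|(l : ℝ)|)⁻¹ ≤ R * (2*R)⁻¹ := by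
            apply mul_le_mul_of_nonneg_left hsingle (le_of_lt hR)
      _ = 1/2 := by first | (field_simp; ring) | field_simp
    have hfac : ∀ l ∈ s \ s₀, 1 - R * (|(l : ℝ)|)⁻¹
        ≤ Complex.abs (1 - z / ((l : ℝ) : ℂ)) := by
      intro l hl
      have htr : Complex.abs z / Complex.abs (((l : ℝ) : ℂ))
          ≤ R * (|(l : ℝ)|)⁻¹ := by
        rw [Complex.abs_ofReal, div_eq_mul_inv]
        exact mul_le_mul_of_nonneg_right hzR (inv_nonneg.mpr (abs_nonneg _))
      have h1 : Complex.abs (z / ((l : ℝ) : ℂ)) ≤ R * (|(l : ℝ)|)⁻¹ := by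
        rw [map_div₀]; exact htr
      have h2 : (1:ℝ) ≤ Complex.abs (1 - z / ((l : ℝ) : ℂ)) + Complex.abs (z / ((l : ℝ) : ℂ)) := by
        have := Complex.abs.add_le (1 - z / ((l : ℝ) : ℂ)) (z / ((l : ℝ) : ℂ))
        simpa using this
      linarith
    have hprodlow : (1:ℝ)/2 ≤ ∏ l ∈ s \ s₀, Complex.abs (1 - z / ((l : ℝ) : ℂ)) := by
      have hsum : ∑ l ∈ s \ s₀, R * (|(l : ℝ)|)⁻¹ ≤ 1/2 := by
        have := htail (s \ s₀) hdisj
        calc ∑ l ∈ s \ s₀, R * (|(l : ℝ)|)⁻¹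
            = R * ∑ l ∈ s \ s₀, (|(l : ℝ)|)⁻¹ := (Finset.mul_sum _ _ _).symm
        _ ≤ R * (2*R)⁻¹ := mul_le_mul_of_nonneg_left this (le_of_lt hR)
        _ = 1/2 := by first | (field_simp; ring) | field_simp
      have h1 := one_sub_sum_le_prod (s \ s₀) (fun l => R * (|(l : ℝ)|)⁻¹)
        (fun l _ => by positivity) (fun l hl => le_trans (hterm l hl) (by norm_num))
      have h2 : ∏ l ∈ s \ s₀, (1 - R * (|(l : ℝ)|)⁻¹)
          ≤ ∏ l ∈ s \ s₀, Complex.abs (1 - z / ((l : ℝ) : ℂ)) :=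
        Finset.prod_le_prod (fun l hl => by linarith [hterm l hl]) hfac
      linarith
    have hprodlow2 : (1:ℝ)/2 ≤ Complex.abs (∏ l ∈ s \ s₀, (1 - z / ((l : ℝ) : ℂ))) := by
      rw [map_prod]; exact hprodlow
    have habs0 : (0:ℝ) ≤ Complex.abs (∏ l ∈ s₀, (1 - z / ((l : ℝ) : ℂ))) :=
      AbsoluteValue.nonneg _ _
    calc Complex.abs (∏ l ∈ s₀, (1 - z / ((l : ℝ) : ℂ))) / 2
        = (1/2) * Complex.abs (∏ l ∈ s₀, (1 - z / ((l : ℝ) : ℂ))) := by ring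
    _ ≤ Complex.abs (∏ l ∈ s \ s₀, (1 - z / ((l : ℝ) : ℂ)))
          * Complex.abs (∏ l ∈ s₀, (1 - z / ((l : ℝ) : ℂ))) :=
        mul_le_mul_of_nonneg_right hprodlow2 habs0
  have habsT : Tendsto (fun s : Finset ↥σ => Complex.abs (∏ l ∈ s, (1 - z / ((l : ℝ) : ℂ))))
      atTop (𝓝 (Complex.abs (W z))) := (Complex.continuous_abs.tendsto _).comp (hW z)
  exact ge_of_tendsto habsT (eventually_atTop.mpr ⟨s₀, hbound⟩)

lemma W_ne_zero (hσ0 : ∀ x ∈ σ, x ≠ 0)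
    (hW : ∀ z : ℂ, HasProd (fun l : σ => (1 - z / ((l : ℝ) : ℂ))) (W z))
    {z : ℂ} (hz : ∀ l : ↥σ, z ≠ ((l : ℝ) : ℂ)) : W z ≠ 0 := by
  obtain ⟨s₀, -, h⟩ := W_lower hσ0 hW ∅ (Complex.abs z + 1)
    (by positivity)
  have h2 := h z (by linarith [AbsoluteValue.nonneg Complex.abs z])
  intro h0
  rw [h0, map_zero] at h2
  have hpos : (0:ℝ) < Complex.abs (∏ l ∈ s₀, (1 - z / ((l : ℝ) : ℂ))) :=
    AbsoluteValue.pos _ (Finset.prod_ne_zero_iff.mpr fun l _ => factor_ne_zero hσ0 hz l)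
  linarith

lemma W_linear (hσ0 : ∀ x ∈ σ, x ≠ 0)
    (hW : ∀ z : ℂ, HasProd (fun l : σ => (1 - z / ((l : ℝ) : ℂ))) (W z))
    (lam0 : ↥σ) : ∃ δ : ℝ, 0 < δ ∧ ∃ c : ℝ, 0 < c ∧ ∀ z : ℂ,
      Complex.abs (z - ((lam0 : ℝ) : ℂ)) < δ →
        c * Complex.abs (z - ((lam0 : ℝ) : ℂ)) ≤ Complex.abs (W z) := by
  obtain ⟨s₀, hts, h⟩ := W_lower hσ0 hW {lam0} (|(lam0 : ℝ)| + 1) (by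
    have := abs_nonneg ((lam0 : ℝ)); linarith)
  have hmem : lam0 ∈ s₀ := hts (Finset.mem_singleton_self lam0)
  set Q : ℂ → ℂ := fun z => ∏ l ∈ s₀.erase lam0, (1 - z / ((l : ℝ) : ℂ)) with hQdef
  have hsplit : ∀ z : ℂ, ∏ l ∈ s₀, (1 - z / ((l : ℝ) : ℂ))
      = (1 - z / ((lam0 : ℝ) : ℂ)) * Q z :=
    fun z => (Finset.mul_prod_erase s₀ _ hmem).symm
  have hQne : Q (((lam0 : ℝ) : ℂ)) ≠ 0 := by
    apply Finset.prod_ne_zero_iff.mpr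
    intro l hl
    intro hzero
    have h1 : (((lam0 : ℝ) : ℂ)) / ((l : ℝ) : ℂ) = 1 := by
      have := sub_eq_zero.mp hzero; exact this.symm
    have := (div_eq_iff (coe_ne_zero hσ0 l)).mp h1
    rw [one_mul] at this
    have hll : (lam0 : ℝ) = (l : ℝ) := by exact_mod_cast this
    exact (Finset.ne_of_mem_erase hl).symm (Subtype.ext hll)
  have hQcont : Continuous Q := continuous_finset_prod _ (fun l _ => by
    apply Continuous.sub continuous_const
    exact continuous_id.div_const _)
  have hQabs : Tendsto (fun z => Complex.abs (Q z)) (𝓝 (((lam0 : ℝ) : ℂ)))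
      (𝓝 (Complex.abs (Q (((lam0 : ℝ) : ℂ))))) :=
    ((Complex.continuous_abs.comp hQcont).tendsto _)
  have hhalf : Complex.abs (Q (((lam0 : ℝ) : ℂ))) / 2 < Complex.abs (Q (((lam0 : ℝ) : ℂ))) := by
    have := AbsoluteValue.pos Complex.abs hQne
    linarith
  obtain ⟨δ₁, hδ₁pos, hδ₁⟩ := Metric.eventually_nhds_iff.mp
    (hQabs.eventually_const_lt hhalf)
  have habsl : 0 < |(lam0 : ℝ)| := abs_pos.mpr (hσ0 lam0 lam0.2)
  refine ⟨min δ₁ 1, lt_min hδ₁pos one_pos,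
    Complex.abs (Q (((lam0 : ℝ) : ℂ))) / (4 * |(lam0 : ℝ)|),
    div_pos (AbsoluteValue.pos _ hQne) (by nlinarith), ?_⟩
  intro z hz
  have hz1 : Complex.abs (z - ((lam0 : ℝ) : ℂ)) < δ₁ := lt_of_lt_of_le hz (min_le_left _ _)
  have hz2 : Complex.abs (z - ((lam0 : ℝ) : ℂ)) < 1 := lt_of_lt_of_le hz (min_le_right _ _)
  have hzR : Complex.abs z ≤ |(lam0 : ℝ)| + 1 := by
    have htr : Complex.abs z ≤ Complex.abs (z - ((lam0 : ℝ) : ℂ)) + Complex.abs (((lam0 : ℝ) : ℂ)) := by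
      have := Complex.abs.add_le (z - ((lam0 : ℝ) : ℂ)) (((lam0 : ℝ) : ℂ))
      simpa using this
    rw [Complex.abs_ofReal] at htr
    linarith
  have hQz : Complex.abs (Q (((lam0 : ℝ) : ℂ))) / 2 < Complex.abs (Q z) := by
    apply hδ₁
    rw [Complex.dist_eq]
    exact hz1
  have hfac : Complex.abs (1 - z / ((lam0 : ℝ) : ℂ))
      = Complex.abs (z - ((lam0 : ℝ) : ℂ)) / |(lam0 : ℝ)| := by
    have hne := coe_ne_zero hσ0 lam0
    have : (1 : ℂ) - z / ((lam0 : ℝ) : ℂ) = (((lam0 : ℝ) : ℂ) - z) / ((lam0 : ℝ) : ℂ) := by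
      field_simp
    rw [this, map_div₀, Complex.abs_ofReal, Complex.abs.map_sub]
  have hW2 := h z hzR
  rw [hsplit z, map_mul, hfac] at hW2
  have habsz : 0 ≤ Complex.abs (z - ((lam0 : ℝ) : ℂ)) := AbsoluteValue.nonneg _ _
  have step1 : Complex.abs (Q (((lam0 : ℝ) : ℂ))) * Complex.abs (z - ((lam0 : ℝ) : ℂ))
      ≤ 2 * (Complex.abs (z - ((lam0 : ℝ) : ℂ)) * Complex.abs (Q z)) := by nlinarith
  calc Complex.abs (Q (((lam0 : ℝ) : ℂ))) / (4 * |(lam0 : ℝ)|) * Complex.abs (z - ((lam0 : ℝ) : ℂ))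
      = (Complex.abs (Q (((lam0 : ℝ) : ℂ))) * Complex.abs (z - ((lam0 : ℝ) : ℂ))) / (4 * |(lam0 : ℝ)|) := by
        ring
  _ ≤ (2 * (Complex.abs (z - ((lam0 : ℝ) : ℂ)) * Complex.abs (Q z))) / (4 * |(lam0 : ℝ)|) := by
        gcongr
  _ = Complex.abs (z - ((lam0 : ℝ) : ℂ)) / |(lam0 : ℝ)| * Complex.abs (Q z) / 2 := by
        field_simp
        ring
  _ ≤ Complex.abs (W z) := hW2


lemma reflect_hasDerivAt (f : ℂ → ℂ) (hf : Differentiable ℂ f) (w : ℂ) :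
    HasDerivAt (fun z => (starRingEnd ℂ) (f ((starRingEnd ℂ) z)))
      ((starRingEnd ℂ) (deriv f ((starRingEnd ℂ) w))) w := by
  have hf' : HasDerivAt f (deriv f ((starRingEnd ℂ) w)) ((starRingEnd ℂ) w) :=
    (hf ((starRingEnd ℂ) w)).hasDerivAt
  rw [hasDerivAt_iff_tendsto_slope] at hf' ⊢
  have hmaps : Tendsto (fun z : ℂ => (starRingEnd ℂ) z) (𝓝[≠] w) (𝓝[≠] ((starRingEnd ℂ) w)) := by
    rw [tendsto_nhdsWithin_iff]
    constructor
    · exact (Complex.continuous_conj.tendsto w).mono_left nhdsWithin_le_nhds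
    · filter_upwards [eventually_mem_nhdsWithin] with z hz
      intro hcontra
      apply hz
      have : (starRingEnd ℂ) ((starRingEnd ℂ) z) = (starRingEnd ℂ) ((starRingEnd ℂ) w) := by
        rw [hcontra]
      simpa [Complex.conj_conj] using this
  have T1 : Tendsto (fun z => slope f ((starRingEnd ℂ) w) ((starRingEnd ℂ) z)) (𝓝[≠] w)
      (𝓝 (deriv f ((starRingEnd ℂ) w))) := hf'.comp hmaps
  have T2 : Tendsto (fun z => (starRingEnd ℂ) (slope f ((starRingEnd ℂ) w) ((starRingEnd ℂ) z)))
      (𝓝[≠] w) (𝓝 ((starRingEnd ℂ) (deriv f ((starRingEnd ℂ) w)))) :=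
    (Complex.continuous_conj.tendsto _).comp T1
  refine T2.congr ?_
  intro z
  simp only [slope_def_field]
  rw [map_div₀, map_sub, map_sub, Complex.conj_conj, Complex.conj_conj]

lemma reflect_eq (f : ℂ → ℂ) (hf : Differentiable ℂ f) (hreal : ∀ x : ℝ, (f x).im = 0) :
    ∀ z : ℂ, f ((starRingEnd ℂ) z) = (starRingEnd ℂ) (f z) := by
  have hgd : Differentiable ℂ (fun z => (starRingEnd ℂ) (f ((starRingEnd ℂ) z))) :=
    fun w => (reflect_hasDerivAt f hf w).differentiableAt
  have hfa : AnalyticOnNhd ℂ f univ := fun z _ => hf.analyticAt z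
  have hga : AnalyticOnNhd ℂ (fun z => (starRingEnd ℂ) (f ((starRingEnd ℂ) z))) univ :=
    fun z _ => hgd.analyticAt z
  have hseq : Tendsto (fun n : ℕ => (((1:ℝ)/(n+1) : ℝ) : ℂ)) atTop (𝓝[≠] (0:ℂ)) := by
    rw [tendsto_nhdsWithin_iff]
    constructor
    · have : Tendsto (fun n : ℕ => (1:ℝ)/(n+1)) atTop (𝓝 0) :=
        tendsto_one_div_add_atTop_nhds_zero_nat
      have h2 := (Complex.continuous_ofReal.tendsto 0).comp this
      simpa [Function.comp_def] using h2
    · filter_upwards with n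
      simp only [mem_compl_iff, mem_singleton_iff]
      intro h
      have : (1:ℝ)/(n+1) = 0 := by exact_mod_cast h
      have : (0:ℝ) < 1/(n+1) := by positivity
      linarith
  have hfreq : ∃ᶠ z in 𝓝[≠] (0:ℂ), f z = (starRingEnd ℂ) (f ((starRingEnd ℂ) z)) := by
    apply hseq.frequently
    apply Frequently.of_forall
    intro n
    have hx : (starRingEnd ℂ) ((((1:ℝ)/(n+1) : ℝ)) : ℂ) = (((1:ℝ)/(n+1) : ℝ) : ℂ) :=
      Complex.conj_ofReal _
    rw [hx, Complex.conj_eq_iff_im.mpr (hreal _)]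
  have heq := hfa.eqOn_of_preconnected_of_frequently_eq hga isPreconnected_univ
    (mem_univ (0:ℂ)) hfreq
  intro z
  have h1 : f z = (starRingEnd ℂ) (f ((starRingEnd ℂ) z)) := heq (mem_univ z)
  have := congrArg (starRingEnd ℂ) h1
  rw [Complex.conj_conj] at this
  exact this.symm


lemma order_factor (f : ℂ → ℂ) (hf : Differentiable ℂ f) (z₀ w : ℂ) (hw : f w ≠ 0) :
    ∃ (n : ℕ) (g : ℂ → ℂ), AnalyticAt ℂ g z₀ ∧ g z₀ ≠ 0 ∧
      ∀ᶠ z in 𝓝 z₀, f z = (z - z₀) ^ n * g z := by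
  have hfa := hf.analyticAt z₀
  have hfin : analyticOrderAt f z₀ ≠ ⊤ := by
    intro htop
    have hev := analyticOrderAt_eq_top.mp htop
    have hEq : EqOn f 0 univ :=
      AnalyticOnNhd.eqOn_zero_of_preconnected_of_eventuallyEq_zero
        (fun z _ => hf.analyticAt z) isPreconnected_univ (mem_univ z₀) hev
    exact hw (hEq (mem_univ w))
  obtain ⟨n, hn⟩ := ENat.ne_top_iff_exists.mp hfin
  obtain ⟨g, hg, hgne, hev⟩ := hfa.analyticOrderAt_eq_natCast.mp hn.symm
  refine ⟨n, g, hg, hgne, ?_⟩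
  filter_upwards [hev] with z hz
  simpa [smul_eq_mul] using hz



set_option maxHeartbeats 2000000 in
lemma main (σ : Set ℝ) (hσ0 : ∀ x ∈ σ, x ≠ 0)
    (W : ℂ → ℂ) (hWd : Differentiable ℂ W)
    (hW : ∀ z : ℂ, HasProd (fun l : σ => (1 - z / ((l : ℝ) : ℂ))) (W z))
    (η : ℝ → ℝ) (hη : ∀ lam ∈ σ, η lam ≠ 0)
    (Φm Φp : ℂ → ℂ)
    (hΦmd : Differentiable ℂ Φm) (hΦpd : Differentiable ℂ Φp)
    (hΦmreal : ∀ x : ℝ, (Φm x).im = 0)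
    (hm0 : Φm 0 = 1) (hp0 : Φp 0 = 1)
    (hcoup : ∀ lam ∈ σ, Φm (lam : ℂ) = (η lam : ℂ) * Φp (lam : ℂ))
    (hherg : ∀ z : ℂ, 0 < z.im → 0 ≤ (z * Φm z * Φp z / W z).im) :
    ∀ z : ℂ, Φm z = 0 → deriv Φm z ≠ 0 := by
  intro z₀ hz₀ hd
  set N : ℂ → ℂ := fun z => z * Φm z * Φp z with hNdef
  have hNd : Differentiable ℂ N := (differentiable_id.mul hΦmd).mul hΦpd
  have hWne : ∀ z : ℂ, z.im ≠ 0 → W z ≠ 0 := by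
    intro z hz
    apply W_ne_zero hσ0 hW
    intro l h
    rw [h] at hz
    simp at hz
  -- Step 1: N has no zeros in the open upper half-plane
  have hNU : ∀ z : ℂ, 0 < z.im → N z ≠ 0 := by
    intro z₁ hz₁ hNz
    set U : Set ℂ := {z : ℂ | 0 < z.im} with hUdef
    have hUo : IsOpen U := isOpen_lt continuous_const Complex.continuous_im
    have hUpre : IsPreconnected U := (convex_halfSpace_im_gt 0).isPreconnected
    set G : ℂ → ℂ := fun z => N z / W z with hGdef
    have hGa : AnalyticOnNhd ℂ G U := fun z hz =>
      (hNd.analyticAt z).div (hWd.analyticAt z) (hWne z (ne_of_gt hz))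
    have hNzero_global : (∀ z ∈ U, N z = 0) → False := by
      intro hNzero
      have hevI : N =ᶠ[𝓝 I] 0 := by
        filter_upwards [hUo.mem_nhds (by simp [hUdef] : I ∈ U)] with z hz
        exact hNzero z hz
      have hNall : EqOn N 0 univ :=
        AnalyticOnNhd.eqOn_zero_of_preconnected_of_eventuallyEq_zero
          (fun z _ => hNd.analyticAt z) isPreconnected_univ (mem_univ I) hevI
      have hD1 : HasDerivAt N 1 0 := by
        have hmm : HasDerivAt Φm (deriv Φm 0) 0 := (hΦmd 0).hasDerivAt
        have hpp : HasDerivAt Φp (deriv Φp 0) 0 := (hΦpd 0).hasDerivAt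
        have h1 : HasDerivAt (fun z : ℂ => z * Φm z) (1 * Φm 0 + 0 * deriv Φm 0) 0 :=
          (hasDerivAt_id 0).mul hmm
        have h2 := h1.mul hpp
        have : (1 * Φm 0 + 0 * deriv Φm 0) * Φp 0 + 0 * Φm 0 * deriv Φp 0 = 1 := by
          rw [hm0, hp0]; ring
        rw [this] at h2
        exact h2
      have hD0 : HasDerivAt N 0 0 := by
        have hfun : N = fun _ => (0:ℂ) := funext (fun z => hNall (mem_univ z))
        rw [hfun]
        exact hasDerivAt_const 0 0
      exact one_ne_zero (hD1.unique hD0)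
    rcases hGa.is_constant_or_isOpen hUpre with ⟨w, hwc⟩ | hopen
    · have hw0 : w = 0 := by
        have h1 : N z₁ / W z₁ = w := hwc z₁ hz₁
        rw [hNz, zero_div] at h1
        exact h1.symm
      apply hNzero_global
      intro z hz
      have h1 : N z / W z = w := hwc z hz
      rw [hw0] at h1
      exact (div_eq_zero_iff.mp h1).resolve_right (hWne z (ne_of_gt hz))
    · have himg : IsOpen (G '' U) := hopen U (subset_refl U) hUo
      have h0mem : (0:ℂ) ∈ G '' U := ⟨z₁, hz₁, by
        show N z₁ / W z₁ = 0
        rw [hNz, zero_div]⟩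
      obtain ⟨ε, hε, hball⟩ := Metric.isOpen_iff.mp himg 0 h0mem
      have hwmem : ((-(ε/2) : ℝ) : ℂ) * I ∈ G '' U := by
        apply hball
        rw [Metric.mem_ball, Complex.dist_eq, sub_zero, ← Complex.abs_apply, map_mul, Complex.abs_ofReal,
          Complex.abs_I, mul_one, abs_neg, abs_of_pos (by linarith : (0:ℝ) < ε/2)]
        linarith
      obtain ⟨z₂, hz₂U, hz₂⟩ := hwmem
      have him := hherg z₂ hz₂U
      have hGz₂ : (z₂ * Φm z₂ * Φp z₂ / W z₂).im = -(ε/2) := by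
        have : z₂ * Φm z₂ * Φp z₂ / W z₂ = ((-(ε/2) : ℝ) : ℂ) * I := hz₂
        rw [this]
        simp
      rw [hGz₂] at him
      linarith
  -- Step 2: z₀ is real
  have hrefm := reflect_eq Φm hΦmd hΦmreal
  have hz₀im : z₀.im = 0 := by
    rcases lt_trichotomy z₀.im 0 with h | h | h
    · have h2 : 0 < ((starRingEnd ℂ) z₀).im := by
        rw [Complex.conj_im]; linarith
      have h3 : Φm ((starRingEnd ℂ) z₀) = 0 := by rw [hrefm z₀, hz₀, map_zero]
      exact (hNU _ h2 (by show _ * Φm _ * Φp _ = 0; rw [h3]; ring)).elim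
    · exact h
    · exact (hNU z₀ h (by show _ * Φm _ * Φp _ = 0; rw [hz₀]; ring)).elim
  set x₀ : ℝ := z₀.re with hx₀def
  have hz₀eq : ((x₀ : ℝ) : ℂ) = z₀ := by
    apply Complex.ext
    · simp [hx₀def]
    · simp [hz₀im]
  have hz₀ne : z₀ ≠ 0 := by
    intro h
    rw [h, hm0] at hz₀
    exact one_ne_zero hz₀
  -- W 0 = 1
  have hW0 : W 0 = 1 := by
    have h1 : HasProd (fun l : σ => (1 - (0:ℂ) / ((l : ℝ) : ℂ))) (W 0) := hW 0
    have h2 : HasProd (fun l : σ => (1 - (0:ℂ) / ((l : ℝ) : ℂ))) 1 := by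
      have hfn : (fun l : σ => (1 - (0:ℂ) / ((l : ℝ) : ℂ))) = fun _ => 1 := by
        funext l; simp
      rw [hfn]
      exact hasProd_one
    exact h1.unique h2
  -- order factorizations
  obtain ⟨a, gm, hgm, hgmne, hevm⟩ := order_factor Φm hΦmd z₀ 0 (by rw [hm0]; exact one_ne_zero)
  obtain ⟨b, gp, hgp, hgpne, hevp⟩ := order_factor Φp hΦpd z₀ 0 (by rw [hp0]; exact one_ne_zero)
  obtain ⟨k, gW, hgW, hgWne, hevW⟩ := order_factor W hWd z₀ 0 (by rw [hW0]; exact one_ne_zero)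
  -- a ≥ 2
  have ha0 : a ≠ 0 := by
    intro h
    rw [h] at hevm
    have hself := hevm.self_of_nhds
    rw [hz₀] at hself
    simp at hself
    exact hgmne hself.symm
  have ha1 : a ≠ 1 := by
    intro h
    rw [h] at hevm
    have hgd : HasDerivAt gm (deriv gm z₀) z₀ := hgm.differentiableAt.hasDerivAt
    have hid : HasDerivAt (fun z : ℂ => (z - z₀) ^ 1) 1 z₀ := by
      simpa using ((hasDerivAt_id z₀).sub_const z₀)
    have h1 := hid.mul hgd
    have hval : (1 : ℂ) * gm z₀ + (z₀ - z₀) ^ 1 * deriv gm z₀ = gm z₀ := by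
      simp
    rw [hval] at h1
    have h2 : HasDerivAt Φm (gm z₀) z₀ := h1.congr_of_eventuallyEq hevm
    rw [h2.deriv] at hd
    exact hgmne hd
  have ha2 : 2 ≤ a := by omega
  -- k + 2 ≤ a + b
  have hk2 : k + 2 ≤ a + b := by
    by_cases hmem : x₀ ∈ σ
    · have hb1 : 1 ≤ b := by
        have hΦp0 : Φp z₀ = 0 := by
          have hc := hcoup x₀ hmem
          rw [hz₀eq, hz₀] at hc
          have hηne : ((η x₀ : ℝ) : ℂ) ≠ 0 := Complex.ofReal_ne_zero.mpr (hη x₀ hmem)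
          exact (mul_eq_zero.mp hc.symm).resolve_left hηne
        have hb0 : b ≠ 0 := by
          intro h
          rw [h] at hevp
          have hself := hevp.self_of_nhds
          rw [hΦp0] at hself
          simp at hself
          exact hgpne hself.symm
        omega
      have hk1 : k ≤ 1 := by
        obtain ⟨δ, hδ, c, hc, hlin⟩ := W_linear hσ0 hW ⟨x₀, hmem⟩
        by_contra hk
        push_neg at hk
        obtain ⟨δ₂, hδ₂, hballW⟩ := Metric.eventually_nhds_iff.mp hevW
        set M : ℝ := Complex.abs (gW z₀) + 1 with hMdef
        have hM : 0 < M := by positivity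
        have habsgc : ContinuousAt (fun z => Complex.abs (gW z)) z₀ :=
          Complex.continuous_abs.continuousAt.comp hgW.continuousAt
        obtain ⟨δ₃, hδ₃, hballg⟩ := Metric.eventually_nhds_iff.mp
          (habsgc.eventually_lt_const (by simp [hMdef] : Complex.abs (gW z₀) < M))
        set t : ℝ := min (min 1 (c/(2*M))) (min (δ/2) (min (δ₂/2) (δ₃/2))) with htdef
        have ht0 : 0 < t := by
          apply lt_min
          · apply lt_min one_pos
            positivity
          · exact lt_min (by linarith) (lt_min (by linarith) (by linarith))
        have ht1 : t ≤ 1 := le_trans (min_le_left _ _) (min_le_left _ _)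
        have htc : t ≤ c/(2*M) := le_trans (min_le_left _ _) (min_le_right _ _)
        have htδ : t < δ := lt_of_le_of_lt (le_trans (min_le_right _ _) (min_le_left _ _)) (by linarith)
        have htδ₂ : t < δ₂ := lt_of_le_of_lt (le_trans (min_le_right _ _)
          (le_trans (min_le_right _ _) (min_le_left _ _))) (by linarith)
        have htδ₃ : t < δ₃ := lt_of_le_of_lt (le_trans (min_le_right _ _)
          (le_trans (min_le_right _ _) (min_le_right _ _))) (by linarith)
        set z : ℂ := z₀ + ((t : ℝ) : ℂ) with hzdef
        have hzdist : Complex.abs (z - z₀) = t := by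
          rw [hzdef]
          simp [Complex.abs_ofReal, abs_of_pos ht0]
        have hcoe : (((⟨x₀, hmem⟩ : ↥σ) : ℝ) : ℂ) = z₀ := hz₀eq
        have hlin2 := hlin z (by rw [hcoe, hzdist]; exact htδ)
        rw [hcoe, hzdist] at hlin2
        have hWz : W z = (z - z₀) ^ k * gW z := hballW (by rw [Complex.dist_eq, ← Complex.abs_apply, hzdist]; exact htδ₂)
        have hgz : Complex.abs (gW z) < M := hballg (by rw [Complex.dist_eq, ← Complex.abs_apply, hzdist]; exact htδ₃)
        have habsW : Complex.abs (W z) ≤ t^2 * M := by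
          rw [hWz, map_mul, map_pow, hzdist]
          have h1 : t ^ k ≤ t ^ 2 := pow_le_pow_of_le_one (le_of_lt ht0) ht1 hk
          have h2 : (0:ℝ) ≤ t ^ k := by positivity
          nlinarith [AbsoluteValue.nonneg Complex.abs (gW z)]
        have hct : c * t ≤ t^2 * M := le_trans hlin2 habsW
        have htc2 : 2*M*t ≤ c := by
          rw [le_div_iff₀ (by positivity)] at htc
          linarith
        nlinarith [mul_pos hc ht0, mul_le_mul_of_nonneg_left htc2 (le_of_lt ht0)]
      omega
    · have hWz₀ : W z₀ ≠ 0 := by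
        apply W_ne_zero hσ0 hW
        intro l h
        rw [← hz₀eq] at h
        have : x₀ = (l : ℝ) := by exact_mod_cast h
        rw [this] at hmem
        exact hmem l.2
      have hk0 : k = 0 := by
        by_contra hk
        have hself := hevW.self_of_nhds
        rw [sub_self, zero_pow hk, zero_mul] at hself
        exact hWz₀ hself
      omega
  -- the boundary Herglotz contradiction
  set cc : ℂ := z₀ * gm z₀ * gp z₀ / gW z₀ with hccdef
  have hccne : cc ≠ 0 :=
    div_ne_zero (mul_ne_zero (mul_ne_zero hz₀ne hgmne) hgpne) hgWne
  set φ : ℝ := cc.arg with hφdef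
  obtain ⟨d, hd0, hd2, hdsin⟩ : ∃ d : ℝ, 0 < d ∧ d < 2*Real.pi ∧ Real.sin (φ + d) < 0 := by
    have hφ1 : -Real.pi < φ := Complex.neg_pi_lt_arg cc
    have hφ2 : φ ≤ Real.pi := Complex.arg_le_pi cc
    have hπ := Real.pi_pos
    rcases lt_trichotomy φ (-(Real.pi/2)) with h | h | h
    · refine ⟨-(Real.pi/2) - φ, by linarith, by linarith, ?_⟩
      have he : φ + (-(Real.pi/2) - φ) = -(Real.pi/2) := by ring
      rw [he, Real.sin_neg, Real.sin_pi_div_two]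
      linarith
    · refine ⟨Real.pi/4, by linarith, by linarith, ?_⟩
      rw [h]
      have he : -(Real.pi/2) + Real.pi/4 = -(Real.pi/4) := by ring
      rw [he, Real.sin_neg]
      have := Real.sin_pos_of_pos_of_lt_pi (by linarith : (0:ℝ) < Real.pi/4) (by linarith)
      linarith
    · refine ⟨3*Real.pi/2 - φ, by linarith, by linarith, ?_⟩
      have he : φ + (3*Real.pi/2 - φ) = Real.pi/2 + Real.pi := by ring
      rw [he, Real.sin_add_pi, Real.sin_pi_div_two]
      linarith
  set m : ℕ := a + b - k with hmdef
  have hm2 : 2 ≤ m := by omega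
  have hmk : m + k = a + b := by omega
  set θ : ℝ := d / m with hθdef
  have hm0' : (0:ℝ) < (m:ℝ) := by exact_mod_cast (by omega : 0 < m)
  have hθ0 : 0 < θ := div_pos hd0 hm0'
  have hθπ : θ < Real.pi := by
    rw [hθdef, div_lt_iff₀ hm0']
    have h2m : (2:ℝ) ≤ (m:ℝ) := by exact_mod_cast hm2
    nlinarith [Real.pi_pos]
  set u : ℂ := Complex.exp ((θ:ℂ) * I) with hudef
  have huim : 0 < u.im := by
    rw [hudef, Complex.exp_ofReal_mul_I_im]
    exact Real.sin_pos_of_pos_of_lt_pi hθ0 hθπ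
  have huabs : Complex.abs u = 1 := by
    rw [hudef]; exact Complex.norm_exp_ofReal_mul_I θ
  have hmθ : (m:ℝ) * θ = d := by
    rw [hθdef]; field_simp
  have humc : (u^m * cc).im < 0 := by
    have habsc : ((Complex.abs cc : ℝ) : ℂ) * Complex.exp ((φ:ℂ) * I) = cc :=
      Complex.norm_mul_exp_arg_mul_I cc
    have hupow : u ^ m = Complex.exp (((d:ℝ):ℂ) * I) := by
      rw [hudef, ← Complex.exp_nat_mul]
      congr 1
      rw [← hmθ]
      push_cast
      ring
    have hexp : Complex.exp (((d:ℝ):ℂ) * I) * Complex.exp ((φ:ℂ) * I)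
        = Complex.exp (((d + φ : ℝ):ℂ) * I) := by
      rw [← Complex.exp_add]
      congr 1
      push_cast
      ring
    have hcomb : u^m * cc = ((Complex.abs cc : ℝ) : ℂ) * Complex.exp (((d + φ : ℝ):ℂ) * I) := by
      calc u^m * cc
          = Complex.exp (((d:ℝ):ℂ)*I) * (((Complex.abs cc:ℝ):ℂ) * Complex.exp ((φ:ℂ)*I)) := by
            rw [hupow, habsc]
      _ = ((Complex.abs cc:ℝ):ℂ) * (Complex.exp (((d:ℝ):ℂ)*I) * Complex.exp ((φ:ℂ)*I)) := by
            ring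
      _ = _ := by rw [hexp]
    rw [hcomb]
    have him : (((Complex.abs cc : ℝ) : ℂ) * Complex.exp (((d + φ : ℝ):ℂ) * I)).im
        = Complex.abs cc * Real.sin (d + φ) := by
      rw [Complex.mul_im, Complex.ofReal_re, Complex.ofReal_im, Complex.exp_ofReal_mul_I_im]
      ring
    rw [him]
    have habspos : 0 < Complex.abs cc := AbsoluteValue.pos _ hccne
    have hsn : Real.sin (d + φ) < 0 := by rw [add_comm]; exact hdsin
    exact mul_neg_of_pos_of_neg habspos hsn
  -- the limit argument
  have hcont : Tendsto (fun r : ℝ =>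
      u^m * ((z₀ + r*u) * gm (z₀ + r*u) * gp (z₀ + r*u) / gW (z₀ + r*u)))
      (𝓝[>] (0:ℝ)) (𝓝 (u^m * cc)) := by
    apply Tendsto.mono_left _ nhdsWithin_le_nhds
    have hzr : Tendsto (fun r : ℝ => z₀ + (r:ℂ) * u) (𝓝 0) (𝓝 z₀) := by
      have hcz : Continuous fun r : ℝ => z₀ + (r:ℂ) * u :=
        continuous_const.add (Complex.continuous_ofReal.mul continuous_const)
      have h0 := hcz.tendsto 0
      simpa using h0
    have hcontg : ContinuousAt (fun z : ℂ => u^m * (z * gm z * gp z / gW z)) z₀ := by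
      apply ContinuousAt.mul continuousAt_const
      exact ContinuousAt.div
        ((continuousAt_id.mul hgm.continuousAt).mul hgp.continuousAt)
        hgW.continuousAt hgWne
    have hfin := hcontg.tendsto.comp hzr
    simpa [hccdef, Function.comp_def] using hfin
  have hne_u : u ≠ 0 := Complex.exp_ne_zero _
  have heqv : ∀ᶠ r : ℝ in 𝓝[>] (0:ℝ),
      (N (z₀ + (r:ℂ)*u) / W (z₀ + (r:ℂ)*u)) / ((r:ℂ))^m
      = u^m * ((z₀ + (r:ℂ)*u) * gm (z₀ + (r:ℂ)*u) * gp (z₀ + (r:ℂ)*u) / gW (z₀ + (r:ℂ)*u)) := by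
    obtain ⟨δm, hδm, hm'⟩ := Metric.eventually_nhds_iff.mp hevm
    obtain ⟨δp, hδp, hp'⟩ := Metric.eventually_nhds_iff.mp hevp
    obtain ⟨δW, hδW, hW'⟩ := Metric.eventually_nhds_iff.mp hevW
    obtain ⟨δg, hδg, hg'⟩ := Metric.eventually_nhds_iff.mp
      (hgW.continuousAt.eventually_ne hgWne)
    set ρ : ℝ := min (min δm δp) (min δW δg) with hρdef
    have hρ0 : 0 < ρ := lt_min (lt_min hδm hδp) (lt_min hδW hδg)
    have hIoo : Ioo (0:ℝ) ρ ∈ 𝓝[>] (0:ℝ) := Ioo_mem_nhdsGT hρ0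
    filter_upwards [hIoo] with r hr
    obtain ⟨hr0, hrρ⟩ := hr
    set zr : ℂ := z₀ + (r:ℂ) * u with hzrdef
    have hdist : dist zr z₀ = r := by
      rw [Complex.dist_eq]
      have : zr - z₀ = (r:ℂ) * u := by rw [hzrdef]; ring
      rw [this, ← Complex.abs_apply, map_mul, huabs, Complex.abs_ofReal, mul_one, abs_of_pos hr0]
    have hb1 : dist zr z₀ < δm := by rw [hdist]; exact lt_of_lt_of_le hrρ (le_trans (min_le_left _ _) (min_le_left _ _))
    have hb2 : dist zr z₀ < δp := by rw [hdist]; exact lt_of_lt_of_le hrρ (le_trans (min_le_left _ _) (min_le_right _ _))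
    have hb3 : dist zr z₀ < δW := by rw [hdist]; exact lt_of_lt_of_le hrρ (le_trans (min_le_right _ _) (min_le_left _ _))
    have hb4 : dist zr z₀ < δg := by rw [hdist]; exact lt_of_lt_of_le hrρ (le_trans (min_le_right _ _) (min_le_right _ _))
    have hm2' : Φm zr = ((r:ℂ)*u) ^ a * gm zr := by
      rw [hm' hb1]
      congr 2
      rw [hzrdef]; ring
    have hp2' : Φp zr = ((r:ℂ)*u) ^ b * gp zr := by
      rw [hp' hb2]
      congr 2
      rw [hzrdef]; ring
    have hW2' : W zr = ((r:ℂ)*u) ^ k * gW zr := by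
      rw [hW' hb3]
      congr 2
      rw [hzrdef]; ring
    have hg2' : gW zr ≠ 0 := hg' hb4
    have hrne : ((r:ℝ):ℂ) ≠ 0 := Complex.ofReal_ne_zero.mpr (ne_of_gt hr0)
    have hNzr : N zr = ((r:ℂ)*u) ^ (a+b) * (zr * gm zr * gp zr) := by
      show zr * Φm zr * Φp zr = _
      rw [hm2', hp2', pow_add]
      ring
    rw [hNzr, hW2']
    rw [← hmk, pow_add, mul_pow]
    field_simp
  have hlim : Tendsto (fun r : ℝ => (N (z₀ + (r:ℂ)*u) / W (z₀ + (r:ℂ)*u)) / ((r:ℂ))^m)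
      (𝓝[>] (0:ℝ)) (𝓝 (u^m * cc)) := by
    refine Filter.Tendsto.congr' ?_ hcont
    filter_upwards [heqv] with r hr using hr.symm
  have hev0 : ∀ᶠ r : ℝ in 𝓝[>] (0:ℝ), 0 ≤ ((N (z₀ + (r:ℂ)*u) / W (z₀ + (r:ℂ)*u)) / ((r:ℂ))^m).im := by
    filter_upwards [self_mem_nhdsWithin] with r hr
    have hr0 : (0:ℝ) < r := hr
    have hzrim : (z₀ + (r:ℂ)*u).im = r * u.im := by
      rw [Complex.add_im, hz₀im, Complex.mul_im, Complex.ofReal_re, Complex.ofReal_im]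
      ring
    have h1 := hherg (z₀ + (r:ℂ)*u) (by rw [hzrim]; positivity)
    have h2 : ((N (z₀ + (r:ℂ)*u) / W (z₀ + (r:ℂ)*u)) / ((r:ℂ))^m).im
        = (N (z₀ + (r:ℂ)*u) / W (z₀ + (r:ℂ)*u)).im / r^m := by
      have hcast : ((r:ℝ):ℂ)^m = ((r^m : ℝ) : ℂ) := by push_cast; ring
      rw [hcast, div_eq_mul_inv _ (((r^m:ℝ)):ℂ), ← Complex.ofReal_inv, Complex.mul_im,
        Complex.ofReal_re, Complex.ofReal_im]
      ring
    rw [h2]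
    apply div_nonneg _ (by positivity)
    exact h1
  have hfinal : 0 ≤ (u^m * cc).im := by
    have himT : Tendsto (fun r : ℝ => ((N (z₀ + (r:ℂ)*u) / W (z₀ + (r:ℂ)*u)) / ((r:ℂ))^m).im)
        (𝓝[>] (0:ℝ)) (𝓝 ((u^m * cc).im)) := (Complex.continuous_im.tendsto _).comp hlim
    exact ge_of_tendsto himT hev0
  linarith

end CouplingAux

/-- If `(Φ₋, Φ₊)` solves the coupling problem with data `η` where
`η(λ)` is finite and nonzero for all `λ ∈ σ`, then all zeros of `Φ₋` and `Φ₊`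
are simple. -/
theorem coupling_zeros_simple
    (σ : Set ℝ) (hσ0 : ∀ x ∈ σ, x ≠ 0)
    (W : ℂ → ℂ) (hWd : Differentiable ℂ W)
    (hW : ∀ z : ℂ, HasProd (fun l : σ => (1 - z / ((l : ℝ) : ℂ))) (W z))
    (η : ℝ → ℝ) (hη : ∀ lam ∈ σ, η lam ≠ 0)
    (Φm Φp : ℂ → ℂ)
    (hΦmd : Differentiable ℂ Φm) (hΦpd : Differentiable ℂ Φp)
    (hΦmreal : ∀ x : ℝ, (Φm x).im = 0) (hΦpreal : ∀ x : ℝ, (Φp x).im = 0)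
    (hΦmtype : ∀ ε > (0 : ℝ), ∃ C : ℝ, ∀ z : ℂ,
      ‖Φm z‖ ≤ C * Real.exp (ε * ‖z‖))
    (hΦptype : ∀ ε > (0 : ℝ), ∃ C : ℝ, ∀ z : ℂ,
      ‖Φp z‖ ≤ C * Real.exp (ε * ‖z‖))
    (hnorm : Φm 0 = 1 ∧ Φp 0 = 1)
    (hcoup : ∀ lam ∈ σ, Φm (lam : ℂ) = (η lam : ℂ) * Φp (lam : ℂ))
    (hherg : ∀ z : ℂ, 0 < z.im → 0 ≤ (z * Φm z * Φp z / W z).im) :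
    (∀ z : ℂ, Φm z = 0 → deriv Φm z ≠ 0) ∧
    (∀ z : ℂ, Φp z = 0 → deriv Φp z ≠ 0) := by
  obtain ⟨hm0, hp0⟩ := hnorm
  have hcoup' : ∀ lam ∈ σ, Φp (lam : ℂ) = (((η lam)⁻¹ : ℝ) : ℂ) * Φm (lam : ℂ) := by
    intro lam hl
    rw [hcoup lam hl, Complex.ofReal_inv]
    rw [inv_mul_cancel_left₀ (Complex.ofReal_ne_zero.mpr (hη lam hl))]
  have hη' : ∀ lam ∈ σ, (η lam)⁻¹ ≠ 0 := fun lam hl => inv_ne_zero (hη lam hl)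
  have hherg' : ∀ z : ℂ, 0 < z.im → 0 ≤ (z * Φp z * Φm z / W z).im := by
    intro z hz
    have h := hherg z hz
    have he : z * Φp z * Φm z = z * Φm z * Φp z := by ring
    rw [he]
    exact h
  exact ⟨CouplingAux.main σ hσ0 W hWd hW η hη Φm Φp hΦmd hΦpd hΦmreal hm0 hp0 hcoup hherg,
    CouplingAux.main σ hσ0 W hWd hW (fun lam => (η lam)⁻¹) hη' Φp Φm hΦpd hΦmd hΦpreal
      hp0 hm0 hcoup' hherg'⟩
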